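/- Let Q_a = N(a, σ²) and Q_b = N(b, σ²) with σ > 0, and Z a standard Gaussian random variable. Then ‖Q_a − Q_b‖_TV = P(|Z| ≤ |a − b|/(2σ)). -/

import Mathlib

open MeasureTheory ProbabilityTheory Real

/-- Total variation distance between two measures. -/
noncomputable def tvDist {E : Type*} [MeasurableSpace E] (P Q : Measure E) : ℝ :=
  ⨆ A : {s : Set E // MeasurableSet s}, ((P A).toReal - (Q A).toReal)

section Aux

lemma gauss_toReal (m : ℝ) {v : NNReal} (hv : v ≠ 0) (s : Set ℝ) :
    ((gaussianReal m v) s).toReal = ∫ x in s, gaussianPDFReal m v x := by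
  rw [gaussianReal_apply_eq_integral m hv s,
    ENNReal.toReal_ofReal (integral_nonneg fun x => gaussianPDFReal_nonneg m v x)]

lemma gauss_eq_map {σ : ℝ} (hσ : 0 < σ) (a : ℝ) :
    gaussianReal a (Real.toNNReal (σ ^ 2)) = (gaussianReal 0 1).map (fun z => σ * z + a) := by
  have h : (fun z : ℝ => σ * z + a) = (· + a) ∘ (σ * ·) := rfl
  rw [h, ← Measure.map_map (measurable_add_const a) (measurable_const_mul σ),
    gaussianReal_map_const_mul, gaussianReal_map_add_const]
  congr 1
  · simp
  · rw [mul_one]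
    exact NNReal.coe_injective (by simp [Real.coe_toNNReal _ (sq_nonneg σ)])

lemma gauss_Ioi {σ : ℝ} (hσ : 0 < σ) (a m : ℝ) :
    gaussianReal a (Real.toNNReal (σ ^ 2)) (Set.Ioi m)
      = gaussianReal 0 1 (Set.Ioi ((m - a) / σ)) := by
  rw [gauss_eq_map hσ a, Measure.map_apply (by fun_prop) measurableSet_Ioi]
  congr 1
  ext z
  simp only [Set.mem_preimage, Set.mem_Ioi]
  rw [div_lt_iff₀ hσ]
  constructor <;> intro h <;> nlinarith

lemma tvDist_le_tvDist {E : Type*} [MeasurableSpace E] (P Q : Measure E)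
    [IsProbabilityMeasure P] [IsProbabilityMeasure Q] : tvDist P Q ≤ tvDist Q P := by
  have hcompl : ∀ (R : Measure E) [IsProbabilityMeasure R] (A : Set E), MeasurableSet A →
      (R Aᶜ).toReal = 1 - (R A).toReal := by
    intro R hR A hA
    rw [prob_compl_eq_one_sub hA, ENNReal.toReal_sub_of_le prob_le_one ENNReal.one_ne_top,
      ENNReal.toReal_one]
  have hbdd : BddAbove (Set.range fun A : {s : Set E // MeasurableSet s} =>
      ((Q A).toReal - (P A).toReal)) := by
    refine ⟨1, ?_⟩
    rintro y ⟨A, rfl⟩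
    have h1 : (Q (A : Set E)).toReal ≤ 1 := by
      simpa using ENNReal.toReal_mono ENNReal.one_ne_top (prob_le_one (μ := Q) (s := A))
    have h2 : 0 ≤ (P (A : Set E)).toReal := ENNReal.toReal_nonneg
    simp only
    linarith
  refine ciSup_le fun A => ?_
  obtain ⟨A, hA⟩ := A
  have : (P A).toReal - (Q A).toReal = (Q Aᶜ).toReal - (P Aᶜ).toReal := by
    rw [hcompl Q A hA, hcompl P A hA]; ring
  rw [this]
  exact le_ciSup hbdd ⟨Aᶜ, hA.compl⟩

/-- The key asymmetric computation, for `b < a`. -/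
lemma tv_half {σ : ℝ} (hσ : 0 < σ) {a b : ℝ} (hab : b < a) :
    tvDist (gaussianReal a (Real.toNNReal (σ ^ 2))) (gaussianReal b (Real.toNNReal (σ ^ 2)))
      = ((gaussianReal 0 1) {z | |z| ≤ (a - b) / (2 * σ)}).toReal := by
  have hv : Real.toNNReal (σ ^ 2) ≠ 0 := by
    simp only [ne_eq, Real.toNNReal_eq_zero, not_le]
    positivity
  set v : NNReal := Real.toNNReal (σ ^ 2) with hvdef
  have hvr : (v : ℝ) = σ ^ 2 := Real.coe_toNNReal _ (sq_nonneg σ)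
  set c : ℝ := (a - b) / (2 * σ) with hcdef
  have hc : 0 < c := div_pos (sub_pos.mpr hab) (by positivity)
  set m : ℝ := (a + b) / 2 with hmdef
  set f : ℝ → ℝ := gaussianPDFReal a v with hfdef
  set g : ℝ → ℝ := gaussianPDFReal b v with hgdef
  -- pointwise comparison of densities
  have hcmp : ∀ p q x : ℝ, (x - p) ^ 2 ≤ (x - q) ^ 2 →
      gaussianPDFReal q v x ≤ gaussianPDFReal p v x := by
    intro p q x h
    have h2v : (0 : ℝ) < 2 * v := by rw [hvr]; positivity
    simp only [gaussianPDFReal]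
    refine mul_le_mul_of_nonneg_left (Real.exp_le_exp.mpr ?_) (by positivity)
    rw [div_le_div_iff₀ h2v h2v]
    nlinarith
  have key1 : ∀ x : ℝ, x ≤ m → f x ≤ g x := by
    intro x hx
    exact hcmp b a x (by nlinarith [hmdef])
  have key2 : ∀ x : ℝ, m ≤ x → g x ≤ f x := by
    intro x hx
    exact hcmp a b x (by nlinarith [hmdef])
  -- a no-atoms fact for the standard Gaussian
  haveI : NullSingletonClass (gaussianReal 0 1) :=
    ⟨fun x => gaussianReal_absolutelyContinuous 0 one_ne_zero (measure_singleton x)⟩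
  -- computing the value at S = Ioi m
  have hma : (m - a) / σ = -c := by
    rw [hmdef, hcdef]; field_simp; ring
  have hmb : (m - b) / σ = c := by
    rw [hmdef, hcdef]; field_simp; ring
  have hμS : gaussianReal a v (Set.Ioi m) = gaussianReal 0 1 (Set.Ioi (-c)) := by
    rw [hvdef, gauss_Ioi hσ, hma]
  have hνS : gaussianReal b v (Set.Ioi m) = gaussianReal 0 1 (Set.Ioi c) := by
    rw [hvdef, gauss_Ioi hσ, hmb]
  have hsplit : gaussianReal 0 1 (Set.Ioi (-c))
      = gaussianReal 0 1 (Set.Ioc (-c) c) + gaussianReal 0 1 (Set.Ioi c) := by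
    rw [← Set.Ioc_union_Ioi_eq_Ioi (neg_le_self hc.le),
      measure_union (Set.Ioc_disjoint_Ioi le_rfl) measurableSet_Ioi]
  have hset : {z : ℝ | |z| ≤ c} = Set.Icc (-c) c := by
    ext z; simp [abs_le]
  have htarget : ((gaussianReal 0 1) {z : ℝ | |z| ≤ c}).toReal
      = (gaussianReal 0 1 (Set.Ioc (-c) c)).toReal := by
    rw [hset, ← measure_congr (Ioc_ae_eq_Icc (μ := gaussianReal 0 1) (a := -c) (b := c))]
  have hval : (gaussianReal a v (Set.Ioi m)).toReal - (gaussianReal b v (Set.Ioi m)).toReal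
      = ((gaussianReal 0 1) {z : ℝ | |z| ≤ c}).toReal := by
    rw [hμS, hνS, hsplit, htarget,
      ENNReal.toReal_add (measure_ne_top _ _) (measure_ne_top _ _)]
    ring
  -- integrals
  have hIf : Integrable f := integrable_gaussianPDFReal a v
  have hIg : Integrable g := integrable_gaussianPDFReal b v
  have hIfg : Integrable (fun x => f x - g x) := hIf.sub hIg
  have hS : MeasurableSet (Set.Ioi m) := measurableSet_Ioi
  -- the upper bound for arbitrary measurable sets
  have hbound : ∀ A : Set ℝ, MeasurableSet A →
      (gaussianReal a v A).toReal - (gaussianReal b v A).toReal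
        ≤ ((gaussianReal 0 1) {z : ℝ | |z| ≤ c}).toReal := by
    intro A hA
    rw [gauss_toReal a hv A, gauss_toReal b hv A, ← hfdef, ← hgdef,
      ← integral_sub hIf.integrableOn hIg.integrableOn]
    have hnn : 0 ≤ᵐ[volume.restrict (Set.Ioi m)] fun x => f x - g x := by
      refine (ae_restrict_iff' hS).mpr (ae_of_all _ fun x hx => ?_)
      exact sub_nonneg.mpr (key2 x (le_of_lt hx))
    calc ∫ x in A, (f x - g x)
        = (∫ x in A ∩ Set.Ioi m, (f x - g x)) + ∫ x in A \ Set.Ioi m, (f x - g x) :=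
          (integral_inter_add_diff hS hIfg.integrableOn).symm
      _ ≤ (∫ x in Set.Ioi m, (f x - g x)) + 0 := by
          refine add_le_add ?_ ?_
          · exact setIntegral_mono_set hIfg.integrableOn hnn
              (HasSubset.Subset.eventuallyLE Set.inter_subset_right)
          · refine setIntegral_nonpos (hA.diff hS) fun x hx => ?_
            exact sub_nonpos.mpr (key1 x (le_of_not_gt hx.2))
      _ = (∫ x in Set.Ioi m, f x) - ∫ x in Set.Ioi m, g x := by
          rw [add_zero, integral_sub hIf.integrableOn hIg.integrableOn]
      _ = (gaussianReal a v (Set.Ioi m)).toReal - (gaussianReal b v (Set.Ioi m)).toReal := by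
          rw [gauss_toReal a hv, gauss_toReal b hv]
      _ = ((gaussianReal 0 1) {z : ℝ | |z| ≤ c}).toReal := hval
  -- conclude
  refine le_antisymm ?_ ?_
  · refine ciSup_le fun A => ?_
    obtain ⟨A, hA⟩ := A
    exact hbound A hA
  · have hbdd : BddAbove (Set.range fun A : {s : Set ℝ // MeasurableSet s} =>
        ((gaussianReal a v A).toReal - (gaussianReal b v A).toReal)) := by
      refine ⟨((gaussianReal 0 1) {z : ℝ | |z| ≤ c}).toReal, ?_⟩
      rintro y ⟨A, rfl⟩
      exact hbound A A.2
    calc ((gaussianReal 0 1) {z : ℝ | |z| ≤ c}).toReal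
        = (gaussianReal a v (Set.Ioi m)).toReal - (gaussianReal b v (Set.Ioi m)).toReal :=
          hval.symm
      _ ≤ _ := le_ciSup hbdd ⟨Set.Ioi m, hS⟩

end Aux

/-- `‖N(a,σ²) − N(b,σ²)‖_TV = P(|Z| ≤ |a−b|/(2σ))` for a standard Gaussian `Z`. -/
theorem tv_gaussian_eq_prob_abs_le (σ : ℝ) (hσ : 0 < σ) (a b : ℝ) :
    tvDist (gaussianReal a (Real.toNNReal (σ ^ 2))) (gaussianReal b (Real.toNNReal (σ ^ 2)))
      = ((gaussianReal 0 1) {z | |z| ≤ |a - b| / (2 * σ)}).toReal := by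
  rcases lt_trichotomy a b with hab | hab | hab
  · have h1 := tvDist_le_tvDist (gaussianReal a (Real.toNNReal (σ ^ 2)))
      (gaussianReal b (Real.toNNReal (σ ^ 2)))
    have h2 := tvDist_le_tvDist (gaussianReal b (Real.toNNReal (σ ^ 2)))
      (gaussianReal a (Real.toNNReal (σ ^ 2)))
    have hsym := le_antisymm h1 h2
    rw [hsym, tv_half hσ hab, abs_sub_comm, abs_of_pos (sub_pos.mpr hab)]
  · subst hab
    have hz : |a - a| / (2 * σ) = 0 := by simp
    have hset : {z : ℝ | |z| ≤ |a - a| / (2 * σ)} = {(0 : ℝ)} := by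
      ext z
      simp [hz, abs_nonpos_iff]
    haveI : NullSingletonClass (gaussianReal 0 1) :=
      ⟨fun x => gaussianReal_absolutelyContinuous 0 one_ne_zero (measure_singleton x)⟩
    rw [hset, measure_singleton]
    simp only [ENNReal.toReal_zero]
    unfold tvDist
    haveI : Nonempty {s : Set ℝ // MeasurableSet s} := ⟨⟨∅, MeasurableSet.empty⟩⟩
    simp
  · rw [tv_half hσ hab, abs_of_pos (sub_pos.mpr hab)]
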